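/- Suppose Assumption 2 holds. Then there exist constants C > 0 and λ ∈ (0,1), depending only on n, w, B, such that for all i ∈ {1,...,n} and all integers t ≥ 2, the broadcast vectors x̂_{i,t} generated by Algorithm 1 satisfy ‖x̂_{i,t} − x̄_t‖ ≤ C λ^{t−2} Σ_{j=1}^n ‖x̂_{j,1}‖ + (1/n) Σ_{j=1}^n ‖ε̂_{j,t−1}‖ + ‖ε̂_{i,t−1}‖ + C Σ_{s=1}^{t−2} λ^{t−s−2} Σ_{j=1}^n ‖ε̂_{j,s}‖, where x̄_t = (1/n) Σ_{j=1}^n x̂_{j,t} and ε̂_{i,s} = x̂_{i,s+1} − z_{i,s+1}. -/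

import Mathlib

open Finset

/-- Product of mixing matrices: `prodW W τ k = W (τ+k-1) * ⋯ * W τ` (identity for k = 0). -/
def prodW {n : ℕ} (W : ℕ → Fin n → Fin n → ℝ) (τ : ℕ) : ℕ → Fin n → Fin n → ℝ
  | 0 => fun i j => if i = j then 1 else 0
  | (k+1) => fun i j => ∑ m, W (τ + k) i m * prodW W τ k m j

lemma prodW_nonneg {n : ℕ} {W : ℕ → Fin n → Fin n → ℝ} (hW : ∀ t i j, 0 ≤ W t i j)
    (τ k : ℕ) : ∀ i j, 0 ≤ prodW W τ k i j := by
  induction k with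
  | zero =>
    intro i j
    simp only [prodW]
    split <;> norm_num
  | succ k ih =>
    intro i j
    exact Finset.sum_nonneg fun m _ => mul_nonneg (hW _ _ _) (ih m j)

lemma prodW_row {n : ℕ} {W : ℕ → Fin n → Fin n → ℝ}
    (hrow : ∀ t i, ∑ j, W t i j = 1) (τ k : ℕ) : ∀ i, ∑ j, prodW W τ k i j = 1 := by
  induction k with
  | zero =>
    intro i
    simp [prodW]
  | succ k ih =>
    intro i
    simp only [prodW]
    rw [Finset.sum_comm]
    calc ∑ m, ∑ j, W (τ + k) i m * prodW W τ k m j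
        = ∑ m, W (τ + k) i m * ∑ j, prodW W τ k m j := by
          simp [Finset.mul_sum]
      _ = 1 := by simp [ih, hrow]

lemma prodW_col {n : ℕ} {W : ℕ → Fin n → Fin n → ℝ}
    (hcol : ∀ t j, ∑ i, W t i j = 1) (τ k : ℕ) : ∀ j, ∑ i, prodW W τ k i j = 1 := by
  induction k with
  | zero =>
    intro j
    simp [prodW]
  | succ k ih =>
    intro j
    simp only [prodW]
    rw [Finset.sum_comm]
    calc ∑ m, ∑ i, W (τ + k) i m * prodW W τ k m j
        = ∑ m, (∑ i, W (τ + k) i m) * prodW W τ k m j := by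
          simp [Finset.sum_mul]
      _ = 1 := by simp [ih, hcol]

lemma prodW_lb {n : ℕ} {W : ℕ → Fin n → Fin n → ℝ} {w : ℝ} (hw0 : 0 ≤ w)
    (hW : ∀ t i j, 0 ≤ W t i j) (hw : ∀ t i j, 0 < W t i j → w ≤ W t i j)
    (τ k : ℕ) : ∀ i j, prodW W τ k i j = 0 ∨ w ^ k ≤ prodW W τ k i j := by
  induction k with
  | zero =>
    intro i j
    simp only [prodW]
    split
    · right; norm_num
    · left; rfl
  | succ k ih =>
    intro i j
    by_cases h : ∀ m : Fin n, W (τ + k) i m * prodW W τ k m j = 0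
    · left
      simp only [prodW]
      exact Finset.sum_eq_zero fun m _ => h m
    · right
      push_neg at h
      obtain ⟨m, hm⟩ := h
      have h1 : 0 ≤ W (τ + k) i m := hW _ _ _
      have h2 : 0 ≤ prodW W τ k m j := prodW_nonneg hW τ k m j
      have hWpos : 0 < W (τ + k) i m := by
        rcases lt_or_eq_of_le h1 with h | h
        · exact h
        · exact absurd (by rw [← h]; ring) hm
      have hPpos : 0 < prodW W τ k m j := by
        rcases lt_or_eq_of_le h2 with h | h
        · exact h
        · exact absurd (by rw [← h]; ring) hm
      have hP : w ^ k ≤ prodW W τ k m j := (ih m j).resolve_left (ne_of_gt hPpos)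
      have : w ^ (k + 1) ≤ W (τ + k) i m * prodW W τ k m j := by
        rw [pow_succ, mul_comm]
        exact mul_le_mul (hw _ _ _ hWpos) hP (pow_nonneg hw0 k) (le_of_lt hWpos)
      refine le_trans this ?_
      simp only [prodW]
      exact Finset.single_le_sum (f := fun c => W (τ + k) i c * prodW W τ k c j)
        (fun c _ => mul_nonneg (hW _ _ _) (prodW_nonneg hW τ k c j)) (Finset.mem_univ m)

lemma prodW_pos {n B : ℕ} (hn : 0 < n) (hB : 0 < B) {W : ℕ → Fin n → Fin n → ℝ}
    (hW : ∀ t i j, 0 ≤ W t i j) (hdiag : ∀ t i, 0 < W t i i)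
    (hconn : ∀ t (i j : Fin n),
      Relation.ReflTransGen (fun a b => ∃ l, l < B ∧ 0 < W (t + l) b a) i j)
    (τ : ℕ) : ∀ i j, 0 < prodW W τ (n * B) i j := by
  intro i j
  -- set of agents having received information from j after k steps
  set T : ℕ → Finset (Fin n) := fun k => univ.filter fun m => 0 < prodW W τ k m j with hT
  have hmemT : ∀ k m, m ∈ T k ↔ 0 < prodW W τ k m j := by
    intro k m; simp [hT]
  have h0 : j ∈ T 0 := by
    rw [hmemT]; simp [prodW]
  have hstep : ∀ k a b, a ∈ T k → 0 < W (τ + k) b a → b ∈ T (k + 1) := by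
    intro k a b ha hb
    rw [hmemT] at ha ⊢
    have h1 : 0 < W (τ + k) b a * prodW W τ k a j := mul_pos hb ha
    have h2 : W (τ + k) b a * prodW W τ k a j ≤ ∑ m, W (τ + k) b m * prodW W τ k m j :=
      Finset.single_le_sum (f := fun c => W (τ + k) b c * prodW W τ k c j)
        (fun c _ => mul_nonneg (hW _ _ _) (prodW_nonneg hW τ k c j)) (Finset.mem_univ a)
    exact lt_of_lt_of_le h1 h2
  have hmono1 : ∀ k, T k ⊆ T (k + 1) := by
    intro k m hm
    exact hstep k m m hm (hdiag _ _)
  have hmono : ∀ k l, T k ⊆ T (k + l) := by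
    intro k l
    induction l with
    | zero => exact Finset.Subset.refl _
    | succ l ih => exact le_trans ih (hmono1 (k + l))
  have hmono' : ∀ k l, k ≤ l → T k ⊆ T l := by
    intro k l hkl
    have := hmono k (l - k)
    rwa [Nat.add_sub_cancel' hkl] at this
  have hgrow : ∀ k, T k ≠ univ → ∃ b, b ∈ T (k + B) ∧ b ∉ T k := by
    intro k hne
    obtain ⟨b0, hb0⟩ : ∃ b0, b0 ∉ T k := by
      by_contra h
      push_neg at h
      exact hne (Finset.eq_univ_of_forall h)
    have hQ : ∀ c : Fin n,
        Relation.ReflTransGen (fun a b => ∃ l, l < B ∧ 0 < W (τ + k + l) b a) j c →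
        c ∈ T k ∨ ∃ b, b ∈ T (k + B) ∧ b ∉ T k := by
      intro c hc
      induction hc with
      | refl => exact Or.inl (hmono' 0 k (Nat.zero_le k) h0)
      | @tail d e hjd hde ih =>
        rcases ih with hd' | hwit
        · obtain ⟨l, hlB, hWpos⟩ := hde
          by_cases hek : e ∈ T k
          · exact Or.inl hek
          · right
            refine ⟨e, ?_, hek⟩
            have hd'' : d ∈ T (k + l) := hmono' k (k + l) (Nat.le_add_right _ _) hd'
            have he : e ∈ T (k + l + 1) := by
              refine hstep (k + l) d e hd'' ?_
              rwa [Nat.add_assoc] at hWpos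
            exact hmono' (k + l + 1) (k + B) (by omega) he
        · exact Or.inr hwit
    rcases hQ b0 (hconn (τ + k) j b0) with h | h
    · exact absurd h hb0
    · exact h
  have hcard : ∀ m : ℕ, T (m * B) = univ ∨ m + 1 ≤ (T (m * B)).card := by
    intro m
    induction m with
    | zero =>
      right
      have : ({j} : Finset (Fin n)) ⊆ T 0 := by
        intro x hx
        simp only [Finset.mem_singleton] at hx
        subst hx; exact h0
      simpa using Finset.card_le_card this
    | succ m ih =>
      rcases ih with huniv | hc
      · left
        have hsub : T (m * B) ⊆ T ((m + 1) * B) := by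
          have heq : (m + 1) * B = m * B + B := by ring
          rw [heq]
          exact hmono' _ _ (Nat.le_add_right _ _)
        exact Finset.univ_subset_iff.mp (by rw [← huniv]; exact hsub)
      · by_cases huniv : T (m * B) = univ
        · left
          have hsub : T (m * B) ⊆ T ((m + 1) * B) := by
            have heq : (m + 1) * B = m * B + B := by ring
            rw [heq]
            exact hmono' _ _ (Nat.le_add_right _ _)
          exact Finset.univ_subset_iff.mp (by rw [← huniv]; exact hsub)
        · right
          obtain ⟨b, hb1, hb2⟩ := hgrow (m * B) huniv
          have hss : T (m * B) ⊂ T (m * B + B) := by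
            refine Finset.ssubset_iff_of_subset (hmono' _ _ (Nat.le_add_right _ _)) |>.mpr ?_
            exact ⟨b, hb1, hb2⟩
          have := Finset.card_lt_card hss
          have heq : (m + 1) * B = m * B + B := by ring
          rw [heq]
          omega
  have hfull : T (n * B) = univ := by
    rcases hcard n with h | h
    · exact h
    · have hle : (T (n * B)).card ≤ n := by
        simpa using Finset.card_le_card (Finset.subset_univ (T (n * B)))
      omega
  have : i ∈ T (n * B) := by rw [hfull]; exact Finset.mem_univ i
  rwa [hmemT] at this

lemma xhat_unroll {n p : ℕ} {W : ℕ → Fin n → Fin n → ℝ}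
    {xhat eps : Fin n → ℕ → EuclideanSpace ℝ (Fin p)}
    (heps : ∀ j t, 1 ≤ t → xhat j (t + 1) = (∑ m, W t j m • xhat m t) + eps j t)
    (τ : ℕ) (hτ : 1 ≤ τ) : ∀ k (i : Fin n),
    xhat i (τ + k) = (∑ j, prodW W τ k i j • xhat j τ) +
      ∑ s ∈ Finset.range k, ∑ m, prodW W (τ + s + 1) (k - 1 - s) i m • eps m (τ + s) := by
  intro k
  induction k with
  | zero =>
    intro i
    simp [prodW]
  | succ k ih =>
    intro i
    have hx : xhat i (τ + (k + 1)) =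
        (∑ j, W (τ + k) i j • xhat j (τ + k)) + eps i (τ + k) := by
      have : τ + (k + 1) = (τ + k) + 1 := by omega
      rw [this]
      exact heps i (τ + k) (by omega)
    have e1 : ∑ j, W (τ + k) i j • xhat j (τ + k)
        = (∑ m, prodW W τ (k + 1) i m • xhat m τ) +
          ∑ s ∈ Finset.range k, ∑ m, prodW W (τ + s + 1) (k - s) i m • eps m (τ + s) := by
      have step1 : ∑ j, W (τ + k) i j • xhat j (τ + k)
          = (∑ j, W (τ + k) i j • ∑ m, prodW W τ k j m • xhat m τ)
            + ∑ j, W (τ + k) i j •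
                ∑ s ∈ Finset.range k, ∑ m, prodW W (τ + s + 1) (k - 1 - s) j m • eps m (τ + s) := by
        rw [← Finset.sum_add_distrib]
        refine Finset.sum_congr rfl fun j _ => ?_
        rw [ih j, smul_add]
      have hA : (∑ j, W (τ + k) i j • ∑ m, prodW W τ k j m • xhat m τ)
          = ∑ m, prodW W τ (k + 1) i m • xhat m τ := by
        simp only [Finset.smul_sum, smul_smul]
        rw [Finset.sum_comm]
        refine Finset.sum_congr rfl fun m _ => ?_
        rw [← Finset.sum_smul]
        rfl
      have hB : (∑ j, W (τ + k) i j •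
            ∑ s ∈ Finset.range k, ∑ m, prodW W (τ + s + 1) (k - 1 - s) j m • eps m (τ + s))
          = ∑ s ∈ Finset.range k, ∑ m, prodW W (τ + s + 1) (k - s) i m • eps m (τ + s) := by
        simp only [Finset.smul_sum, smul_smul]
        rw [Finset.sum_comm]
        refine Finset.sum_congr rfl fun s hs => ?_
        rw [Finset.sum_comm]
        refine Finset.sum_congr rfl fun m _ => ?_
        rw [← Finset.sum_smul]
        have hsk : s < k := Finset.mem_range.mp hs
        have h1 : k - s = (k - 1 - s) + 1 := by omega
        have h2 : τ + s + 1 + (k - 1 - s) = τ + k := by omega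
        rw [h1]
        show (∑ j, W (τ + k) i j * prodW W (τ + s + 1) (k - 1 - s) j m) • eps m (τ + s)
            = (∑ j, W (τ + s + 1 + (k - 1 - s)) i j * prodW W (τ + s + 1) (k - 1 - s) j m)
              • eps m (τ + s)
        rw [h2]
      rw [step1, hA, hB]
    rw [hx, e1]
    rw [Finset.sum_range_succ]
    have h3 : ∀ s, s ∈ Finset.range k → (k + 1 - 1 - s) = k - s := fun s _ => by omega
    have h4 : ∑ m, prodW W (τ + k + 1) (k + 1 - 1 - k) i m • eps m (τ + k) = eps i (τ + k) := by
      simp [prodW]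
    rw [h4]
    have h5 : ∑ s ∈ Finset.range k, ∑ m, prodW W (τ + s + 1) (k + 1 - 1 - s) i m • eps m (τ + s)
        = ∑ s ∈ Finset.range k, ∑ m, prodW W (τ + s + 1) (k - s) i m • eps m (τ + s) := by
      refine Finset.sum_congr rfl fun s hs => ?_
      rw [h3 s hs]
    rw [h5]
    abel

lemma sum_xhat_unroll {n p : ℕ} {W : ℕ → Fin n → Fin n → ℝ}
    {xhat eps : Fin n → ℕ → EuclideanSpace ℝ (Fin p)}
    (hcol : ∀ t j, ∑ i, W t i j = 1)
    (heps : ∀ j t, 1 ≤ t → xhat j (t + 1) = (∑ m, W t j m • xhat m t) + eps j t)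
    (τ : ℕ) (hτ : 1 ≤ τ) (k : ℕ) :
    ∑ i, xhat i (τ + k) = (∑ j, xhat j τ) + ∑ s ∈ Finset.range k, ∑ m, eps m (τ + s) := by
  have h1 : ∀ i : Fin n, xhat i (τ + k) = (∑ j, prodW W τ k i j • xhat j τ) +
      ∑ s ∈ Finset.range k, ∑ m, prodW W (τ + s + 1) (k - 1 - s) i m • eps m (τ + s) :=
    xhat_unroll heps τ hτ k
  calc ∑ i, xhat i (τ + k)
      = ∑ i, ((∑ j, prodW W τ k i j • xhat j τ) +
          ∑ s ∈ Finset.range k, ∑ m, prodW W (τ + s + 1) (k - 1 - s) i m • eps m (τ + s)) :=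
        Finset.sum_congr rfl fun i _ => h1 i
    _ = (∑ i, ∑ j, prodW W τ k i j • xhat j τ) +
          ∑ i, ∑ s ∈ Finset.range k, ∑ m, prodW W (τ + s + 1) (k - 1 - s) i m • eps m (τ + s) :=
        Finset.sum_add_distrib
    _ = (∑ j, xhat j τ) + ∑ s ∈ Finset.range k, ∑ m, eps m (τ + s) := by
        congr 1
        · rw [Finset.sum_comm]
          refine Finset.sum_congr rfl fun j _ => ?_
          rw [← Finset.sum_smul, prodW_col hcol τ k j, one_smul]
        · rw [Finset.sum_comm]
          refine Finset.sum_congr rfl fun s _ => ?_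
          rw [Finset.sum_comm]
          refine Finset.sum_congr rfl fun m _ => ?_
          rw [← Finset.sum_smul, prodW_col hcol _ _ m, one_smul]

lemma contract_bound {n p : ℕ} (P : Fin n → Fin n → ℝ) (η : ℝ) (hη : 0 ≤ η)
    (hlb : ∀ i j, η ≤ P i j) (hProw : ∀ i, ∑ j, P i j = 1)
    (y : Fin n → EuclideanSpace ℝ (Fin p)) (hy : ∑ j, y j = 0)
    (D : ℝ) (hD : 0 ≤ D) (hyD : ∀ j, ‖y j‖ ≤ D) (i : Fin n) :
    ‖∑ j, P i j • y j‖ ≤ (1 - n * η) * D := by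
  have key : ∑ j, P i j • y j = ∑ j, (P i j - η) • y j := by
    have : ∑ j, (P i j - η) • y j = (∑ j, P i j • y j) - η • ∑ j, y j := by
      rw [Finset.smul_sum, ← Finset.sum_sub_distrib]
      exact Finset.sum_congr rfl fun j _ => by rw [sub_smul]
    rw [this, hy, smul_zero, sub_zero]
  rw [key]
  calc ‖∑ j, (P i j - η) • y j‖ ≤ ∑ j, ‖(P i j - η) • y j‖ := norm_sum_le _ _
    _ = ∑ j, (P i j - η) * ‖y j‖ := by
        refine Finset.sum_congr rfl fun j _ => ?_
        rw [norm_smul, Real.norm_eq_abs, abs_of_nonneg (sub_nonneg.mpr (hlb i j))]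
    _ ≤ ∑ j, (P i j - η) * D := by
        refine Finset.sum_le_sum fun j _ => ?_
        exact mul_le_mul_of_nonneg_left (hyD j) (sub_nonneg.mpr (hlb i j))
    _ = (1 - n * η) * D := by
        rw [← Finset.sum_mul]
        congr 1
        rw [Finset.sum_sub_distrib, hProw i, Finset.sum_const, Finset.card_univ,
          Fintype.card_fin, nsmul_eq_mul]

lemma pert_bound {n p : ℕ} (hn : 0 < n) (P : Fin n → Fin n → ℝ) (hP0 : ∀ i j, 0 ≤ P i j)
    (hProw : ∀ i, ∑ j, P i j = 1) (v : Fin n → EuclideanSpace ℝ (Fin p)) (i : Fin n) :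
    ‖(∑ m, P i m • v m) - (n : ℝ)⁻¹ • ∑ m, v m‖ ≤ 2 * ∑ m, ‖v m‖ := by
  have hn1 : (1 : ℝ) ≤ (n : ℝ) := by exact_mod_cast hn
  have hinv : (n : ℝ)⁻¹ ≤ 1 := by
    rw [inv_le_one_iff₀]; right; exact hn1
  have h1 : ‖∑ m, P i m • v m‖ ≤ ∑ m, ‖v m‖ := by
    calc ‖∑ m, P i m • v m‖ ≤ ∑ m, ‖P i m • v m‖ := norm_sum_le _ _
      _ = ∑ m, P i m * ‖v m‖ := by
          refine Finset.sum_congr rfl fun m _ => ?_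
          rw [norm_smul, Real.norm_eq_abs, abs_of_nonneg (hP0 i m)]
      _ ≤ ∑ m, 1 * ‖v m‖ := by
          refine Finset.sum_le_sum fun m _ => ?_
          refine mul_le_mul_of_nonneg_right ?_ (norm_nonneg _)
          calc P i m ≤ ∑ j, P i j :=
                Finset.single_le_sum (fun j _ => hP0 i j) (Finset.mem_univ m)
            _ = 1 := hProw i
      _ = ∑ m, ‖v m‖ := by simp
  have h2 : ‖(n : ℝ)⁻¹ • ∑ m, v m‖ ≤ ∑ m, ‖v m‖ := by
    rw [norm_smul, Real.norm_eq_abs, abs_of_nonneg (by positivity)]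
    calc (n : ℝ)⁻¹ * ‖∑ m, v m‖ ≤ 1 * ‖∑ m, v m‖ :=
          mul_le_mul_of_nonneg_right hinv (norm_nonneg _)
      _ = ‖∑ m, v m‖ := one_mul _
      _ ≤ ∑ m, ‖v m‖ := norm_sum_le _ _
  calc ‖(∑ m, P i m • v m) - (n : ℝ)⁻¹ • ∑ m, v m‖
      ≤ ‖∑ m, P i m • v m‖ + ‖(n : ℝ)⁻¹ • ∑ m, v m‖ := norm_sub_le _ _
    _ ≤ (∑ m, ‖v m‖) + ∑ m, ‖v m‖ := add_le_add h1 h2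
    _ = 2 * ∑ m, ‖v m‖ := by ring

lemma dev_unroll {n p : ℕ} {W : ℕ → Fin n → Fin n → ℝ}
    {xhat eps : Fin n → ℕ → EuclideanSpace ℝ (Fin p)}
    (hrow : ∀ t i, ∑ j, W t i j = 1) (hcol : ∀ t j, ∑ i, W t i j = 1)
    (heps : ∀ j t, 1 ≤ t → xhat j (t + 1) = (∑ m, W t j m • xhat m t) + eps j t)
    (τ : ℕ) (hτ : 1 ≤ τ) (k : ℕ) (i : Fin n) :
    xhat i (τ + k) - (n : ℝ)⁻¹ • ∑ j, xhat j (τ + k) =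
      (∑ j, prodW W τ k i j • (xhat j τ - (n : ℝ)⁻¹ • ∑ m, xhat m τ)) +
      ∑ s ∈ Finset.range k,
        ((∑ m, prodW W (τ + s + 1) (k - 1 - s) i m • eps m (τ + s)) -
          (n : ℝ)⁻¹ • ∑ m, eps m (τ + s)) := by
  rw [xhat_unroll heps τ hτ k i, sum_xhat_unroll hcol heps τ hτ k]
  have h3 : ∑ j, prodW W τ k i j • (xhat j τ - (n : ℝ)⁻¹ • ∑ m, xhat m τ)
      = (∑ j, prodW W τ k i j • xhat j τ) - (n : ℝ)⁻¹ • ∑ m, xhat m τ := by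
    simp only [smul_sub]
    rw [Finset.sum_sub_distrib, ← Finset.sum_smul, prodW_row hrow τ k i, one_smul]
  rw [h3, smul_add]
  simp only [Finset.smul_sum, Finset.sum_sub_distrib]
  abel

/-- Lemma 1 of the paper: disagreement bound for the consensus step. There are
constants `C > 0` and `lam ∈ (0,1)`, depending only on `n`, `w`, `B`, such that
the broadcast vectors satisfy the stated geometric disagreement estimate, where
`x̄_t = (1/n) Σ_j x̂_{j,t}` and `ε̂_{i,s} = x̂_{i,s+1} − z_{i,s+1}`. -/
theorem lemma1_disagreement (n : ℕ) (hn : 0 < n) (w : ℝ) (hw0 : 0 < w) (hw1 : w < 1)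
    (B : ℕ) (hB : 0 < B) :
    ∃ C > 0, ∃ lam : ℝ, 0 < lam ∧ lam < 1 ∧
      ∀ (p : ℕ) (W : ℕ → Fin n → Fin n → ℝ)
        (xhat z : Fin n → ℕ → EuclideanSpace ℝ (Fin p)),
        (∀ t i j, 0 ≤ W t i j) →
        (∀ t i, 0 < W t i i) →
        (∀ t i j, 0 < W t i j → w ≤ W t i j) →
        (∀ t i, ∑ j, W t i j = 1) →
        (∀ t j, ∑ i, W t i j = 1) →
        (∀ t (i j : Fin n),
          Relation.ReflTransGen (fun a b => ∃ l, l < B ∧ 0 < W (t + l) b a) i j) →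
        (∀ i t, 1 ≤ t → z i (t + 1) = ∑ j, W t i j • xhat j t) →
        ∀ (i : Fin n) (t : ℕ), 2 ≤ t →
          ‖xhat i t - (n : ℝ)⁻¹ • ∑ j, xhat j t‖ ≤
            C * lam ^ (t - 2) * ∑ j, ‖xhat j 1‖ +
            (1 / (n : ℝ)) * ∑ j, ‖xhat j t - z j t‖ +
            ‖xhat i t - z i t‖ +
            C * ∑ s ∈ Finset.Icc 1 (t - 2),
              lam ^ (t - s - 2) * ∑ j, ‖xhat j (s + 1) - z j (s + 1)‖ := by
  set L := n * B with hLdef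
  have hL : 0 < L := Nat.mul_pos hn hB
  set η : ℝ := w ^ L with hηdef
  have hηpos : 0 < η := pow_pos hw0 L
  set ρ' : ℝ := max (1 - n * η) 2⁻¹ with hρdef
  have hρpos : (0 : ℝ) < ρ' := lt_of_lt_of_le (by norm_num) (le_max_right _ _)
  have hρlt1 : ρ' < 1 := by
    apply max_lt
    · have h1 : (0 : ℝ) < n * η := by
        have : (0:ℝ) < (n:ℝ) := Nat.cast_pos.mpr hn
        positivity
      linarith
    · norm_num
  set lam : ℝ := ρ' ^ ((L : ℝ)⁻¹) with hlamdef
  have hlampos : 0 < lam := Real.rpow_pos_of_pos hρpos _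
  have hlamlt1 : lam < 1 :=
    Real.rpow_lt_one (le_of_lt hρpos) hρlt1 (inv_pos.mpr (Nat.cast_pos.mpr hL))
  have hlamL : lam ^ L = ρ' := Real.rpow_inv_natCast_pow (le_of_lt hρpos) hL.ne'
  have hlamle1 : lam ≤ 1 := le_of_lt hlamlt1
  set C : ℝ := 2 / ρ' with hCdef
  have hCpos : 0 < C := by positivity
  have hClamL : C * lam ^ L = 2 := by
    rw [hlamL, hCdef]
    field_simp
  refine ⟨C, hCpos, lam, hlampos, hlamlt1, ?_⟩
  intro p W xhat z hW0 hdiag hwlb hrow hcol hconn hz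
  set eps : Fin n → ℕ → EuclideanSpace ℝ (Fin p) :=
    fun j s => xhat j (s + 1) - z j (s + 1) with hepsdef
  have heps : ∀ j t, 1 ≤ t → xhat j (t + 1) = (∑ m, W t j m • xhat m t) + eps j t := by
    intro j t ht
    rw [hepsdef]
    simp only
    rw [← hz j t ht]
    abel
  set E0 : ℝ := ∑ j, ‖xhat j 1‖ with hE0def
  have hE0 : 0 ≤ E0 := Finset.sum_nonneg fun j _ => norm_nonneg _
  set e : ℕ → ℝ := fun s => ∑ j, ‖eps j s‖ with hedef
  have he : ∀ s, 0 ≤ e s := fun s => Finset.sum_nonneg fun j _ => norm_nonneg _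
  have hn1 : (1 : ℝ) ≤ (n : ℝ) := by exact_mod_cast hn
  have hnne : ((n : ℝ)) ≠ 0 := by positivity
  have hdsum : ∀ τ : ℕ, ∑ j, (xhat j τ - (n : ℝ)⁻¹ • ∑ m, xhat m τ) = 0 := by
    intro τ
    rw [Finset.sum_sub_distrib, Finset.sum_const, Finset.card_univ, Fintype.card_fin,
      ← Nat.cast_smul_eq_nsmul ℝ, smul_smul, mul_inv_cancel₀ hnne, one_smul]
    exact sub_self _
  have hinv1 : (n : ℝ)⁻¹ ≤ 1 := by
    rw [inv_le_one_iff₀]; right; exact hn1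
  have hd1 : ∀ j : Fin n, ‖xhat j 1 - (n : ℝ)⁻¹ • ∑ m, xhat m 1‖ ≤ 2 * E0 := by
    intro j
    have h1 : ‖xhat j 1‖ ≤ E0 :=
      Finset.single_le_sum (f := fun m => ‖xhat m 1‖) (fun m _ => norm_nonneg _)
        (Finset.mem_univ j)
    have h2 : ‖(n : ℝ)⁻¹ • ∑ m, xhat m 1‖ ≤ E0 := by
      rw [norm_smul, Real.norm_eq_abs, abs_of_nonneg (by positivity)]
      calc (n : ℝ)⁻¹ * ‖∑ m, xhat m 1‖ ≤ 1 * E0 :=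
            mul_le_mul hinv1 (norm_sum_le _ _) (norm_nonneg _) (by norm_num)
        _ = E0 := one_mul _
    calc ‖xhat j 1 - (n : ℝ)⁻¹ • ∑ m, xhat m 1‖
        ≤ ‖xhat j 1‖ + ‖(n : ℝ)⁻¹ • ∑ m, xhat m 1‖ := norm_sub_le _ _
      _ ≤ E0 + E0 := add_le_add h1 h2
      _ = 2 * E0 := by ring
  have hpert : ∀ (τ' k' s : ℕ) (i : Fin n),
      ‖(∑ m, prodW W (τ' + s + 1) (k' - 1 - s) i m • eps m (τ' + s)) -
        (n : ℝ)⁻¹ • ∑ m, eps m (τ' + s)‖ ≤ 2 * e (τ' + s) := by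
    intro τ' k' s i
    exact pert_bound hn _ (fun a b => prodW_nonneg hW0 _ _ a b) (prodW_row hrow _ _) _ i
  -- main disagreement estimate
  have main : ∀ τ, 1 ≤ τ → ∀ i : Fin n, ‖xhat i τ - (n : ℝ)⁻¹ • ∑ j, xhat j τ‖ ≤
      C * lam ^ (τ - 1) * E0 + C * ∑ s ∈ Finset.Icc 1 (τ - 1), lam ^ (τ - 1 - s) * e s := by
    intro τ
    induction τ using Nat.strong_induction_on with
    | _ τ IH =>
    intro hτ i
    by_cases hcase : τ ≤ L
    · -- base regime: unroll from time 1
      have hdecomp := dev_unroll hrow hcol heps 1 le_rfl (τ - 1) i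
      have hτ1 : 1 + (τ - 1) = τ := by omega
      rw [hτ1] at hdecomp
      have hX : ‖∑ j, prodW W 1 (τ - 1) i j •
          (xhat j 1 - (n : ℝ)⁻¹ • ∑ m, xhat m 1)‖ ≤ 2 * E0 := by
        have := contract_bound (prodW W 1 (τ - 1)) 0 le_rfl
          (fun a b => prodW_nonneg hW0 _ _ a b) (prodW_row hrow _ _) _ (hdsum 1)
          (2 * E0) (by linarith) hd1 i
        simpa using this
      have hY : ‖∑ s ∈ Finset.range (τ - 1),
          ((∑ m, prodW W (1 + s + 1) (τ - 1 - 1 - s) i m • eps m (1 + s)) -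
            (n : ℝ)⁻¹ • ∑ m, eps m (1 + s))‖ ≤ 2 * ∑ u ∈ Finset.Icc 1 (τ - 1), e u := by
        calc ‖∑ s ∈ Finset.range (τ - 1),
              ((∑ m, prodW W (1 + s + 1) (τ - 1 - 1 - s) i m • eps m (1 + s)) -
                (n : ℝ)⁻¹ • ∑ m, eps m (1 + s))‖
            ≤ ∑ s ∈ Finset.range (τ - 1),
              ‖(∑ m, prodW W (1 + s + 1) (τ - 1 - 1 - s) i m • eps m (1 + s)) -
                (n : ℝ)⁻¹ • ∑ m, eps m (1 + s)‖ := norm_sum_le _ _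
          _ ≤ ∑ s ∈ Finset.range (τ - 1), 2 * e (1 + s) :=
              Finset.sum_le_sum fun s _ => hpert 1 (τ - 1) s i
          _ = 2 * ∑ s ∈ Finset.range (τ - 1), e (1 + s) := by rw [Finset.mul_sum]
          _ = 2 * ∑ u ∈ Finset.Icc 1 (τ - 1), e u := by
              congr 1
              rw [← Finset.Ico_add_one_right_eq_Icc, Finset.sum_Ico_eq_sum_range]
              simp
      have hnorm : ‖xhat i τ - (n : ℝ)⁻¹ • ∑ j, xhat j τ‖ ≤
          2 * E0 + 2 * ∑ u ∈ Finset.Icc 1 (τ - 1), e u := by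
        rw [hdecomp]
        exact le_trans (norm_add_le _ _) (add_le_add hX hY)
      refine le_trans hnorm ?_
      have hb1 : (2 : ℝ) ≤ C * lam ^ (τ - 1) := by
        calc (2 : ℝ) = C * lam ^ L := hClamL.symm
          _ ≤ C * lam ^ (τ - 1) := by
            refine mul_le_mul_of_nonneg_left ?_ (le_of_lt hCpos)
            exact pow_le_pow_of_le_one (le_of_lt hlampos) hlamle1 (by omega)
      have hterm : ∀ u ∈ Finset.Icc 1 (τ - 1), 2 * e u ≤ C * (lam ^ (τ - 1 - u) * e u) := by
        intro u hu
        rw [Finset.mem_Icc] at hu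
        have h2C : (2 : ℝ) ≤ C * lam ^ (τ - 1 - u) := by
          calc (2 : ℝ) = C * lam ^ L := hClamL.symm
            _ ≤ _ := mul_le_mul_of_nonneg_left
                (pow_le_pow_of_le_one (le_of_lt hlampos) hlamle1 (by omega)) (le_of_lt hCpos)
        calc 2 * e u ≤ (C * lam ^ (τ - 1 - u)) * e u :=
              mul_le_mul_of_nonneg_right h2C (he u)
          _ = C * (lam ^ (τ - 1 - u) * e u) := by ring
      have hsum2 : 2 * ∑ u ∈ Finset.Icc 1 (τ - 1), e u ≤
          C * ∑ u ∈ Finset.Icc 1 (τ - 1), lam ^ (τ - 1 - u) * e u := by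
        rw [Finset.mul_sum, Finset.mul_sum]
        exact Finset.sum_le_sum hterm
      exact add_le_add (mul_le_mul_of_nonneg_right hb1 hE0) hsum2
    · -- contraction regime: unroll a full block of length L from time τ - L
      push_neg at hcase
      have hτL : 1 ≤ τ - L := by omega
      have hdecomp := dev_unroll hrow hcol heps (τ - L) hτL L i
      have hτ1 : (τ - L) + L = τ := by omega
      rw [hτ1] at hdecomp
      have hPpos : ∀ a b, 0 < prodW W (τ - L) L a b := by
        intro a b
        rw [hLdef]
        exact prodW_pos hn hB hW0 hdiag hconn _ a b
      have hPlb : ∀ a b, η ≤ prodW W (τ - L) L a b := by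
        intro a b
        rcases prodW_lb (le_of_lt hw0) hW0 hwlb (τ - L) L a b with h | h
        · exact absurd h (ne_of_gt (hPpos a b))
        · exact h
      set D : ℝ := C * lam ^ (τ - L - 1) * E0 +
        C * ∑ s ∈ Finset.Icc 1 (τ - L - 1), lam ^ (τ - L - 1 - s) * e s with hDdef
      have hDnn : 0 ≤ D := by
        apply add_nonneg
        · exact mul_nonneg (by positivity) hE0
        · exact mul_nonneg (le_of_lt hCpos)
            (Finset.sum_nonneg fun s _ =>
              mul_nonneg (pow_nonneg (le_of_lt hlampos) _) (he s))
      have hIH : ∀ j : Fin n, ‖xhat j (τ - L) - (n : ℝ)⁻¹ • ∑ m, xhat m (τ - L)‖ ≤ D :=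
        fun j => IH (τ - L) (by omega) hτL j
      have hX : ‖∑ j, prodW W (τ - L) L i j •
          (xhat j (τ - L) - (n : ℝ)⁻¹ • ∑ m, xhat m (τ - L))‖ ≤ ρ' * D := by
        have h1 := contract_bound (prodW W (τ - L) L) η (le_of_lt hηpos) hPlb
          (prodW_row hrow _ _) _ (hdsum (τ - L)) D hDnn hIH i
        refine le_trans h1 ?_
        exact mul_le_mul_of_nonneg_right (le_max_left _ _) hDnn
      have hY : ‖∑ s ∈ Finset.range L,
          ((∑ m, prodW W ((τ - L) + s + 1) (L - 1 - s) i m • eps m ((τ - L) + s)) -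
            (n : ℝ)⁻¹ • ∑ m, eps m ((τ - L) + s))‖ ≤
          2 * ∑ u ∈ Finset.Icc (τ - L) (τ - 1), e u := by
        calc ‖∑ s ∈ Finset.range L,
              ((∑ m, prodW W ((τ - L) + s + 1) (L - 1 - s) i m • eps m ((τ - L) + s)) -
                (n : ℝ)⁻¹ • ∑ m, eps m ((τ - L) + s))‖
            ≤ ∑ s ∈ Finset.range L,
              ‖(∑ m, prodW W ((τ - L) + s + 1) (L - 1 - s) i m • eps m ((τ - L) + s)) -
                (n : ℝ)⁻¹ • ∑ m, eps m ((τ - L) + s)‖ := norm_sum_le _ _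
          _ ≤ ∑ s ∈ Finset.range L, 2 * e ((τ - L) + s) :=
              Finset.sum_le_sum fun s _ => hpert (τ - L) L s i
          _ = 2 * ∑ s ∈ Finset.range L, e ((τ - L) + s) := by rw [Finset.mul_sum]
          _ = 2 * ∑ u ∈ Finset.Icc (τ - L) (τ - 1), e u := by
              congr 1
              rw [← Finset.Ico_add_one_right_eq_Icc, Finset.sum_Ico_eq_sum_range]
              have hh1 : τ - 1 + 1 = τ := by omega
              have hh2 : τ - (τ - L) = L := Nat.sub_sub_self hcase.le
              rw [hh1, hh2]
      have hnorm : ‖xhat i τ - (n : ℝ)⁻¹ • ∑ j, xhat j τ‖ ≤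
          ρ' * D + 2 * ∑ u ∈ Finset.Icc (τ - L) (τ - 1), e u := by
        rw [hdecomp]
        exact le_trans (norm_add_le _ _) (add_le_add hX hY)
      refine le_trans hnorm ?_
      have hA : ρ' * D = C * lam ^ (τ - 1) * E0 +
          C * ∑ s ∈ Finset.Icc 1 (τ - L - 1), lam ^ (τ - 1 - s) * e s := by
        rw [hDdef, mul_add]
        congr 1
        · rw [← hlamL]
          have h1 : lam ^ L * (C * lam ^ (τ - L - 1) * E0) =
              C * (lam ^ L * lam ^ (τ - L - 1)) * E0 := by ring
          rw [h1, ← pow_add]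
          have h2 : L + (τ - L - 1) = τ - 1 := by omega
          rw [h2]
        · calc ρ' * (C * ∑ s ∈ Finset.Icc 1 (τ - L - 1), lam ^ (τ - L - 1 - s) * e s)
              = C * ∑ s ∈ Finset.Icc 1 (τ - L - 1), ρ' * (lam ^ (τ - L - 1 - s) * e s) := by
                rw [← Finset.mul_sum]
                ring
            _ = C * ∑ s ∈ Finset.Icc 1 (τ - L - 1), lam ^ (τ - 1 - s) * e s := by
                congr 1
                refine Finset.sum_congr rfl fun s hs => ?_
                rw [Finset.mem_Icc] at hs
                rw [← hlamL, ← mul_assoc, ← pow_add]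
                have h3 : L + (τ - L - 1 - s) = τ - 1 - s := by omega
                rw [h3]
      have hB2 : 2 * ∑ u ∈ Finset.Icc (τ - L) (τ - 1), e u ≤
          C * ∑ u ∈ Finset.Icc (τ - L) (τ - 1), lam ^ (τ - 1 - u) * e u := by
        rw [Finset.mul_sum, Finset.mul_sum]
        refine Finset.sum_le_sum fun u hu => ?_
        rw [Finset.mem_Icc] at hu
        have h2C : (2 : ℝ) ≤ C * lam ^ (τ - 1 - u) := by
          calc (2 : ℝ) = C * lam ^ L := hClamL.symm
            _ ≤ _ := mul_le_mul_of_nonneg_left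
                (pow_le_pow_of_le_one (le_of_lt hlampos) hlamle1 (by omega)) (le_of_lt hCpos)
        calc 2 * e u ≤ (C * lam ^ (τ - 1 - u)) * e u :=
              mul_le_mul_of_nonneg_right h2C (he u)
          _ = C * (lam ^ (τ - 1 - u) * e u) := by ring
      have hsplit : (∑ s ∈ Finset.Icc 1 (τ - L - 1), lam ^ (τ - 1 - s) * e s) +
          ∑ u ∈ Finset.Icc (τ - L) (τ - 1), lam ^ (τ - 1 - u) * e u =
          ∑ s ∈ Finset.Icc 1 (τ - 1), lam ^ (τ - 1 - s) * e s := by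
        have h1 : Finset.Icc 1 (τ - L - 1) = Finset.Ioc 0 (τ - L - 1) := by
          rw [← Finset.Icc_add_one_left_eq_Ioc, zero_add]
        have h2 : Finset.Icc (τ - L) (τ - 1) = Finset.Ioc (τ - L - 1) (τ - 1) := by
          have h4 : τ - L = (τ - L - 1) + 1 := by omega
          rw [h4, Finset.Icc_add_one_left_eq_Ioc]
          simp
        have h3 : Finset.Icc 1 (τ - 1) = Finset.Ioc 0 (τ - 1) := by
          rw [← Finset.Icc_add_one_left_eq_Ioc, zero_add]
        rw [h1, h2, h3]
        exact Finset.sum_Ioc_consecutive _ (by omega) (by omega)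
      calc ρ' * D + 2 * ∑ u ∈ Finset.Icc (τ - L) (τ - 1), e u
          ≤ (C * lam ^ (τ - 1) * E0 +
              C * ∑ s ∈ Finset.Icc 1 (τ - L - 1), lam ^ (τ - 1 - s) * e s) +
            C * ∑ u ∈ Finset.Icc (τ - L) (τ - 1), lam ^ (τ - 1 - u) * e u := by
            rw [hA]
            exact add_le_add_right hB2 _
        _ = C * lam ^ (τ - 1) * E0 + C * ∑ s ∈ Finset.Icc 1 (τ - 1), lam ^ (τ - 1 - s) * e s := by
            rw [add_assoc, ← mul_add, hsplit]
  -- conclude: one further step from t - 1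
  intro i t ht
  have ht1 : 1 ≤ t - 1 := by omega
  have hdecomp := dev_unroll hrow hcol heps (t - 1) ht1 1 i
  have htt : (t - 1) + 1 = t := by omega
  rw [htt] at hdecomp
  have hsimp : ∑ s ∈ Finset.range 1,
      ((∑ m, prodW W ((t - 1) + s + 1) (1 - 1 - s) i m • eps m ((t - 1) + s)) -
        (n : ℝ)⁻¹ • ∑ m, eps m ((t - 1) + s)) =
      eps i (t - 1) - (n : ℝ)⁻¹ • ∑ m, eps m (t - 1) := by
    rw [Finset.sum_range_one]
    congr 1
    simp [prodW]
  rw [hsimp] at hdecomp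
  have hR := main (t - 1) ht1
  set R : ℝ := C * lam ^ (t - 1 - 1) * E0 +
    C * ∑ s ∈ Finset.Icc 1 (t - 1 - 1), lam ^ (t - 1 - 1 - s) * e s with hRdef
  have hRnn : 0 ≤ R := by
    apply add_nonneg
    · exact mul_nonneg (by positivity) hE0
    · exact mul_nonneg (le_of_lt hCpos)
        (Finset.sum_nonneg fun s _ => mul_nonneg (pow_nonneg (le_of_lt hlampos) _) (he s))
  have hX : ‖∑ j, prodW W (t - 1) 1 i j •
      (xhat j (t - 1) - (n : ℝ)⁻¹ • ∑ m, xhat m (t - 1))‖ ≤ R := by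
    have := contract_bound (prodW W (t - 1) 1) 0 le_rfl
      (fun a b => prodW_nonneg hW0 _ _ a b) (prodW_row hrow _ _) _ (hdsum (t - 1))
      R hRnn hR i
    simpa using this
  have hY : ‖eps i (t - 1) - (n : ℝ)⁻¹ • ∑ m, eps m (t - 1)‖ ≤
      ‖eps i (t - 1)‖ + (n : ℝ)⁻¹ * ∑ m, ‖eps m (t - 1)‖ := by
    refine le_trans (norm_sub_le _ _) ?_
    refine add_le_add_right ?_ _
    rw [norm_smul, Real.norm_eq_abs, abs_of_nonneg (by positivity)]
    exact mul_le_mul_of_nonneg_left (norm_sum_le _ _) (by positivity)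
  have hnorm : ‖xhat i t - (n : ℝ)⁻¹ • ∑ j, xhat j t‖ ≤
      R + (‖eps i (t - 1)‖ + (n : ℝ)⁻¹ * ∑ m, ‖eps m (t - 1)‖) := by
    rw [hdecomp]
    exact le_trans (norm_add_le _ _) (add_le_add hX hY)
  refine le_trans hnorm ?_
  have heq1 : eps i (t - 1) = xhat i t - z i t := by
    rw [hepsdef]
    simp only
    rw [htt]
  have heq2 : ∀ m : Fin n, eps m (t - 1) = xhat m t - z m t := by
    intro m
    rw [hepsdef]
    simp only
    rw [htt]
  have heq3 : ∀ s : ℕ, e s = ∑ j, ‖xhat j (s + 1) - z j (s + 1)‖ := by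
    intro s
    rw [hedef]
  have heq4 : t - 1 - 1 = t - 2 := by omega
  have heq5 : ∀ s : ℕ, t - 2 - s = t - s - 2 := fun s => by omega
  have hReq : R = C * lam ^ (t - 2) * E0 +
      C * ∑ s ∈ Finset.Icc 1 (t - 2), lam ^ (t - s - 2) * e s := by
    rw [hRdef, heq4]
    congr 1
    congr 1
    exact Finset.sum_congr rfl fun s _ => by rw [heq5 s]
  rw [hReq, heq1]
  simp only [heq2, heq3, hE0def]
  rw [one_div]
  apply le_of_eq
  ring
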